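/- Assume for each k ≥ 2 the bounds N_k^+(x) ≪ (∏_{p | k(k−1)} p/(p−1))·x/(log x)² and N_k^−(x) ≪ (∏_{p | k(k+1)} p/(p−1))·x/(log x)², where N_k^{±}(x) counts x < n ≤ 2x with n+1 and kn±1 both prime. Then ∑_{k=2}^{(2x)^δ} N_k^+(x)/k + ∑_{k=2}^{(2x)^δ} N_k^−(x)/k = O(δ·x/log x) for any fixed δ ∈ (0,1). -/

import Mathlib

open Finset

noncomputable def gfun (n : ℕ) : ℝ := ∏ p ∈ n.primeFactors, (p : ℝ) / ((p : ℝ) - 1)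

lemma factor_pos {p : ℕ} (hp : p.Prime) : (0:ℝ) < (p:ℝ) - 1 := by
  have : (2:ℝ) ≤ p := by exact_mod_cast hp.two_le
  linarith

lemma one_le_factor {p : ℕ} (hp : p.Prime) : (1:ℝ) ≤ (p:ℝ) / ((p:ℝ) - 1) := by
  have h := factor_pos hp
  rw [le_div_iff₀ h]; linarith

lemma one_le_gfun (n : ℕ) : 1 ≤ gfun n := by
  rw [gfun]
  calc (1:ℝ) = ∏ _p ∈ n.primeFactors, 1 := by simp
    _ ≤ _ := Finset.prod_le_prod (by intros; norm_num)
        (fun p hp => one_le_factor (Nat.prime_of_mem_primeFactors hp))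

lemma gfun_nonneg (n : ℕ) : 0 ≤ gfun n := le_trans zero_le_one (one_le_gfun n)

-- expansion bound: g(n)^2 ≤ ∑ over subsets of primeFactors
lemma gsq_le (n : ℕ) :
    gfun n ^ 2 ≤ ∑ s ∈ n.primeFactors.powerset, ∏ p ∈ s, 3 / ((p:ℝ) - 1) := by
  have h1 : gfun n ^ 2 = ∏ p ∈ n.primeFactors, ((p:ℝ) / ((p:ℝ) - 1)) ^ 2 := by
    rw [gfun, ← Finset.prod_pow]
  have h2 : ∀ p ∈ n.primeFactors, ((p:ℝ) / ((p:ℝ) - 1)) ^ 2 ≤ 3 / ((p:ℝ) - 1) + 1 := by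
    intro p hp
    have hp' := Nat.prime_of_mem_primeFactors hp
    have h2p : (2:ℝ) ≤ p := by exact_mod_cast hp'.two_le
    have h := factor_pos hp'
    rw [div_pow, div_le_iff₀ (by positivity), add_mul, div_mul_eq_mul_div, sq ((p:ℝ)-1),
      mul_div_assoc, mul_div_cancel_left₀ _ (ne_of_gt h)]
    nlinarith
  calc gfun n ^ 2 ≤ ∏ p ∈ n.primeFactors, (3 / ((p:ℝ) - 1) + 1) := by
        rw [h1]; exact Finset.prod_le_prod (fun p hp => by positivity) h2
    _ = ∑ s ∈ n.primeFactors.powerset, ∏ p ∈ s, 3 / ((p:ℝ) - 1) := by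
        rw [Finset.prod_add]; simp
open Finset

-- harmonic bound restated
lemma sum_inv_le (K : ℕ) : ∑ k ∈ Finset.Icc 1 K, (1:ℝ) / k ≤ 1 + Real.log K := by
  have h := harmonic_le_one_add_log K
  have : (harmonic K : ℝ) = ∑ k ∈ Finset.Icc 1 K, (1:ℝ) / k := by
    rw [harmonic_eq_sum_Icc]; push_cast; simp [one_div]
  linarith [this ▸ h]

-- sum over multiples of d
lemma sum_multiples_le (d K : ℕ) (hd : 1 ≤ d) :
    ∑ k ∈ (Finset.Icc 1 K).filter (fun k => d ∣ k), (1:ℝ) / k ≤ (1 + Real.log K) / d := by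
  classical
  have key : ∑ k ∈ (Finset.Icc 1 K).filter (fun k => d ∣ k), (1:ℝ) / k
      = ∑ j ∈ Finset.Icc 1 (K / d), (1:ℝ) / (j * d) := by
    refine Finset.sum_nbij' (fun k => k / d) (fun j => j * d) ?_ ?_ ?_ ?_ ?_
    · intro k hk
      simp only [Finset.mem_filter, Finset.mem_Icc] at hk ⊢
      obtain ⟨⟨h1, h2⟩, hdvd⟩ := hk
      exact ⟨Nat.one_le_div_iff hd |>.2 (Nat.le_of_dvd h1 hdvd), Nat.div_le_div_right h2⟩
    · intro j hj
      simp only [Finset.mem_filter, Finset.mem_Icc] at hj ⊢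
      obtain ⟨h1, h2⟩ := hj
      refine ⟨⟨Nat.one_le_iff_ne_zero.2 (by positivity), ?_⟩, dvd_mul_left d j⟩
      calc j * d ≤ (K / d) * d := Nat.mul_le_mul_right d h2
        _ ≤ K := Nat.div_mul_le_self K d
    · intro k hk
      simp only [Finset.mem_filter] at hk
      exact Nat.div_mul_cancel hk.2
    · intro j hj
      exact Nat.mul_div_cancel _ hd
    · intro k hk
      simp only [Finset.mem_filter] at hk
      rw [← Nat.cast_mul, Nat.div_mul_cancel hk.2]
  rw [key]
  have : ∑ j ∈ Finset.Icc 1 (K / d), (1:ℝ) / (j * d)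
      = (∑ j ∈ Finset.Icc 1 (K / d), (1:ℝ) / j) / d := by
    rw [Finset.sum_div]
    exact Finset.sum_congr rfl fun j hj => by rw [div_div]
  rw [this]
  have hd' : (0:ℝ) < d := by exact_mod_cast hd
  gcongr
  calc ∑ j ∈ Finset.Icc 1 (K / d), (1:ℝ) / j ≤ 1 + Real.log (K / d : ℕ) := sum_inv_le _
    _ ≤ 1 + Real.log K := by
        gcongr 1 + ?_
        rcases Nat.eq_zero_or_pos (K / d) with h | h
        · simp [h]
          exact Real.log_natCast_nonneg K
        · apply Real.log_le_log (by exact_mod_cast h)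
          exact_mod_cast Nat.div_le_self K d

lemma tele (K : ℕ) : ∑ n ∈ Finset.Icc 2 K, (3:ℝ) / (((n:ℝ) - 1) * n) ≤ 3 := by
  have main : ∀ M : ℕ, ∑ n ∈ Finset.Icc 2 (M + 1), (3:ℝ) / (((n:ℝ) - 1) * n) = 3 - 3 / (M + 1) := by
    intro M
    induction M with
    | zero => simp
    | succ m ih =>
      rw [show m + 1 + 1 = (m + 2) by ring, Finset.sum_Icc_succ_top (by omega), ih]
      have h1 : (0:ℝ) < (m:ℝ) + 1 := by positivity
      have h2 : (0:ℝ) < (m:ℝ) + 2 := by positivity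
      push_cast
      field_simp
      ring
  rcases K with _ | M
  · simp
  · rw [main M]
    have h1 : (0:ℝ) < (M:ℝ) + 1 := by positivity
    have : (0:ℝ) ≤ 3 / ((M:ℝ) + 1) := by positivity
    linarith

lemma L1 (K : ℕ) : ∑ k ∈ Finset.Icc 1 K, gfun k ^ 2 / k ≤ Real.exp 3 * (1 + Real.log K) := by
  classical
  set P : Finset ℕ := (Finset.range (K + 1)).filter Nat.Prime with hP
  have hPprime : ∀ p ∈ P, p.Prime := fun p hp => (Finset.mem_filter.1 hp).2
  have hPF : ∀ k ∈ Finset.Icc 1 K, k.primeFactors ⊆ P := by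
    intro k hk p hp
    rw [Finset.mem_Icc] at hk
    rw [Nat.mem_primeFactors] at hp
    refine Finset.mem_filter.2 ⟨Finset.mem_range.2 ?_, hp.1⟩
    have : p ≤ k := Nat.le_of_dvd (by omega) hp.2.1
    omega
  -- h s notation
  have hnonneg : ∀ s ∈ P.powerset, (0:ℝ) ≤ ∏ p ∈ s, 3 / ((p:ℝ) - 1) := by
    intro s hs
    refine Finset.prod_nonneg fun p hp => ?_
    have := factor_pos (hPprime p (Finset.mem_powerset.1 hs hp))
    positivity
  have hprodpos : ∀ s ∈ P.powerset, 1 ≤ ∏ p ∈ s, p := by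
    intro s hs
    refine Nat.one_le_iff_ne_zero.2 (Finset.prod_ne_zero_iff.2 fun p hp => ?_)
    exact (hPprime p (Finset.mem_powerset.1 hs hp)).pos.ne'
  -- step 1: pointwise bound with indicator over P.powerset
  have step1 : ∀ k ∈ Finset.Icc 1 K, gfun k ^ 2 / k ≤
      ∑ s ∈ P.powerset, (if (∏ p ∈ s, p) ∣ k then (∏ p ∈ s, 3 / ((p:ℝ) - 1)) * (1 / k) else 0) := by
    intro k hk
    have hk1 : 1 ≤ k := (Finset.mem_Icc.1 hk).1
    have hkpos : (0:ℝ) < k := by exact_mod_cast hk1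
    have h1 : gfun k ^ 2 / k ≤ (∑ s ∈ k.primeFactors.powerset, ∏ p ∈ s, 3 / ((p:ℝ) - 1)) / k :=
      div_le_div_of_nonneg_right (gsq_le k) hkpos.le
    refine h1.trans ?_
    rw [Finset.sum_div]
    have heq : ∀ s ∈ k.primeFactors.powerset,
        (∏ p ∈ s, 3 / ((p:ℝ) - 1)) / k
          = (if (∏ p ∈ s, p) ∣ k then (∏ p ∈ s, 3 / ((p:ℝ) - 1)) * (1 / k) else 0) := by
      intro s hs
      have hdvd : (∏ p ∈ s, p) ∣ k :=
        dvd_trans (Finset.prod_dvd_prod_of_subset _ _ _ (Finset.mem_powerset.1 hs))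
          (Nat.prod_primeFactors_dvd k)
      rw [if_pos hdvd, mul_one_div]
    rw [Finset.sum_congr rfl heq]
    refine Finset.sum_le_sum_of_subset_of_nonneg ?_ ?_
    · exact Finset.powerset_mono.2 (hPF k hk)
    · intro s hs _
      split
      · exact mul_nonneg (hnonneg s hs) (by positivity)
      · exact le_refl 0
  calc ∑ k ∈ Finset.Icc 1 K, gfun k ^ 2 / k
      ≤ ∑ k ∈ Finset.Icc 1 K, ∑ s ∈ P.powerset,
          (if (∏ p ∈ s, p) ∣ k then (∏ p ∈ s, 3 / ((p:ℝ) - 1)) * (1 / k) else 0) :=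
        Finset.sum_le_sum step1
    _ = ∑ s ∈ P.powerset, ∑ k ∈ Finset.Icc 1 K,
          (if (∏ p ∈ s, p) ∣ k then (∏ p ∈ s, 3 / ((p:ℝ) - 1)) * (1 / k) else 0) :=
        Finset.sum_comm
    _ ≤ ∑ s ∈ P.powerset, (∏ p ∈ s, 3 / ((p:ℝ) - 1)) * ((1 + Real.log K) / (∏ p ∈ s, p)) := by
        refine Finset.sum_le_sum fun s hs => ?_
        have : ∑ k ∈ Finset.Icc 1 K,
            (if (∏ p ∈ s, p) ∣ k then (∏ p ∈ s, 3 / ((p:ℝ) - 1)) * (1 / k) else 0)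
            = (∏ p ∈ s, 3 / ((p:ℝ) - 1)) *
              ∑ k ∈ (Finset.Icc 1 K).filter (fun k => (∏ p ∈ s, p) ∣ k), (1:ℝ) / k := by
          rw [Finset.mul_sum, Finset.sum_filter]
        rw [this]
        exact mul_le_mul_of_nonneg_left (sum_multiples_le _ _ (hprodpos s hs)) (hnonneg s hs)
    _ = (1 + Real.log K) * ∑ s ∈ P.powerset, ∏ p ∈ s, 3 / (((p:ℝ) - 1) * p) := by
        rw [Finset.mul_sum]
        refine Finset.sum_congr rfl fun s hs => ?_
        have hB : ((∏ p ∈ s, p : ℕ) : ℝ) = ∏ p ∈ s, (p:ℝ) := Nat.cast_prod _ _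
        have h3 : ∏ p ∈ s, 3 / (((p:ℝ) - 1) * p)
            = (∏ p ∈ s, 3 / ((p:ℝ) - 1)) * ∏ p ∈ s, ((p:ℝ))⁻¹ := by
          rw [← Finset.prod_mul_distrib]
          refine Finset.prod_congr rfl fun p hp => ?_
          rw [div_eq_mul_inv, div_eq_mul_inv, mul_inv, ← mul_assoc]
        rw [h3, hB, Finset.prod_inv_distrib, div_eq_mul_inv]
        ring
    _ ≤ (1 + Real.log K) * Real.exp 3 := by
        have hlog : (0:ℝ) ≤ 1 + Real.log K := by
          have := Real.log_natCast_nonneg K; linarith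
        refine mul_le_mul_of_nonneg_left ?_ hlog
        have expand : ∑ s ∈ P.powerset, ∏ p ∈ s, 3 / (((p:ℝ) - 1) * p)
            = ∏ p ∈ P, (3 / (((p:ℝ) - 1) * p) + 1) := by
          rw [Finset.prod_add]
          simp
        rw [expand]
        have hqnonneg : ∀ p ∈ P, (0:ℝ) ≤ 3 / (((p:ℝ) - 1) * p) := by
          intro p hp
          have h1 := factor_pos (hPprime p hp)
          have h2 : (0:ℝ) < p := by exact_mod_cast (hPprime p hp).pos
          positivity
        calc ∏ p ∈ P, (3 / (((p:ℝ) - 1) * p) + 1)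
            ≤ ∏ p ∈ P, Real.exp (3 / (((p:ℝ) - 1) * p)) := by
              refine Finset.prod_le_prod (fun p hp => by linarith [hqnonneg p hp]) fun p hp => ?_
              exact Real.add_one_le_exp _
          _ = Real.exp (∑ p ∈ P, 3 / (((p:ℝ) - 1) * p)) := (Real.exp_sum _ _).symm
          _ ≤ Real.exp 3 := by
              refine Real.exp_le_exp.2 ?_
              calc ∑ p ∈ P, 3 / (((p:ℝ) - 1) * p)
                  ≤ ∑ n ∈ Finset.Icc 2 K, 3 / (((n:ℝ) - 1) * n) := by
                    refine Finset.sum_le_sum_of_subset_of_nonneg ?_ ?_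
                    · intro p hp
                      have hpp := hPprime p hp
                      have := Finset.mem_range.1 (Finset.mem_filter.1 hp).1
                      exact Finset.mem_Icc.2 ⟨hpp.two_le, by omega⟩
                    · intro n hn _
                      have h2 : 2 ≤ n := (Finset.mem_Icc.1 hn).1
                      have h2' : (2:ℝ) ≤ n := by exact_mod_cast h2
                      have : (0:ℝ) < (n:ℝ) - 1 := by linarith
                      positivity
                _ ≤ 3 := tele K
  rw [mul_comm]

lemma shift_sum (f : ℕ → ℝ) (K : ℕ) (hK : 2 ≤ K) :
    ∑ k ∈ Finset.Icc 2 K, f (k - 1) = ∑ j ∈ Finset.Icc 1 (K - 1), f j := by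
  have : Finset.Icc 2 K = Finset.map (addRightEmbedding 1) (Finset.Icc 1 (K - 1)) := by
    rw [Finset.map_add_right_Icc]
    congr 1 <;> omega
  rw [this, Finset.sum_map]
  refine Finset.sum_congr rfl fun j hj => ?_
  simp [addRightEmbedding]

lemma prod_union_le (k m : ℕ) (hk : k ≠ 0) (hm : m ≠ 0) :
    ∏ p ∈ (k * m).primeFactors, (p : ℝ) / ((p : ℝ) - 1) ≤ gfun k * gfun m := by
  rw [Nat.primeFactors_mul hk hm]
  have h1 : ∏ p ∈ k.primeFactors ∪ m.primeFactors, (p : ℝ) / ((p : ℝ) - 1)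
      = gfun k * ∏ p ∈ m.primeFactors \ k.primeFactors, (p : ℝ) / ((p : ℝ) - 1) := by
    rw [← Finset.union_sdiff_self_eq_union, Finset.prod_union Finset.disjoint_sdiff, gfun]
  rw [h1]
  refine mul_le_mul_of_nonneg_left ?_ (gfun_nonneg k)
  have h2 : gfun m = (∏ p ∈ m.primeFactors \ k.primeFactors, (p : ℝ) / ((p : ℝ) - 1)) *
      ∏ p ∈ m.primeFactors ∩ k.primeFactors, (p : ℝ) / ((p : ℝ) - 1) := by
    rw [gfun, ← Finset.prod_union (Finset.disjoint_sdiff_inter _ _), Finset.sdiff_union_inter]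
  rw [h2]
  refine le_mul_of_one_le_right ?_ ?_
  · refine Finset.prod_nonneg fun p hp => ?_
    have := factor_pos (Nat.prime_of_mem_primeFactors (Finset.mem_sdiff.1 hp).1)
    positivity
  · calc (1:ℝ) = ∏ _p ∈ m.primeFactors ∩ k.primeFactors, 1 := by simp
      _ ≤ _ := Finset.prod_le_prod (by intros; norm_num)
          (fun p hp => one_le_factor (Nat.prime_of_mem_primeFactors (Finset.mem_inter.1 hp).1))

lemma S_plus (K : ℕ) (hK : 2 ≤ K) :
    ∑ k ∈ Finset.Icc 2 K, (∏ p ∈ (k * (k - 1)).primeFactors, (p : ℝ) / ((p : ℝ) - 1)) / k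
      ≤ Real.exp 3 * (1 + Real.log K) := by
  have step : ∀ k ∈ Finset.Icc 2 K,
      (∏ p ∈ (k * (k - 1)).primeFactors, (p : ℝ) / ((p : ℝ) - 1)) / k
        ≤ gfun k ^ 2 / k / 2 + gfun (k - 1) ^ 2 / (k - 1 : ℕ) / 2 := by
    intro k hk
    have hk2 : 2 ≤ k := (Finset.mem_Icc.1 hk).1
    have hkR : (2:ℝ) ≤ k := by exact_mod_cast hk2
    have hk1R : (1:ℝ) ≤ ((k - 1 : ℕ) : ℝ) := by
      have : 1 ≤ k - 1 := by omega
      exact_mod_cast this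
    have hle : ((k - 1 : ℕ) : ℝ) ≤ (k : ℝ) := by exact_mod_cast Nat.sub_le k 1
    have h1 : (∏ p ∈ (k * (k - 1)).primeFactors, (p : ℝ) / ((p : ℝ) - 1)) / k
        ≤ gfun k * gfun (k - 1) / k := by
      apply div_le_div_of_nonneg_right (prod_union_le k (k - 1) (by omega) (by omega)) (by linarith)
    refine h1.trans ?_
    have hab : gfun k * gfun (k - 1) ≤ (gfun k ^ 2 + gfun (k - 1) ^ 2) / 2 := by
      nlinarith [sq_nonneg (gfun k - gfun (k - 1))]
    have h2 : gfun k * gfun (k - 1) / k ≤ (gfun k ^ 2 + gfun (k - 1) ^ 2) / 2 / k :=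
      div_le_div_of_nonneg_right hab (by linarith)
    refine h2.trans ?_
    have hc : (0:ℝ) < (k:ℝ) := by linarith
    have hd : (0:ℝ) < ((k - 1 : ℕ) : ℝ) := by linarith
    have e1 : (gfun k ^ 2 + gfun (k - 1) ^ 2) / 2 / k
        = gfun k ^ 2 / k / 2 + gfun (k - 1) ^ 2 / k / 2 := by ring
    have e2 : gfun (k - 1) ^ 2 / k ≤ gfun (k - 1) ^ 2 / ((k - 1 : ℕ) : ℝ) :=
      div_le_div_of_nonneg_left (sq_nonneg _) hd hle
    rw [e1]
    linarith
  refine (Finset.sum_le_sum step).trans ?_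
  rw [Finset.sum_add_distrib]
  have hA : ∑ k ∈ Finset.Icc 2 K, gfun k ^ 2 / k / 2 ≤ Real.exp 3 * (1 + Real.log K) / 2 := by
    rw [← Finset.sum_div]
    apply div_le_div_of_nonneg_right ?_ (by norm_num : (0:ℝ) ≤ 2)
    calc ∑ k ∈ Finset.Icc 2 K, gfun k ^ 2 / k ≤ ∑ k ∈ Finset.Icc 1 K, gfun k ^ 2 / k := by
          refine Finset.sum_le_sum_of_subset_of_nonneg ?_ ?_
          · exact Finset.Icc_subset_Icc (by omega) le_rfl
          · intro k _ _
            have := gfun_nonneg k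
            positivity
      _ ≤ Real.exp 3 * (1 + Real.log K) := L1 K
  have hB : ∑ k ∈ Finset.Icc 2 K, gfun (k - 1) ^ 2 / (k - 1 : ℕ) / 2
      ≤ Real.exp 3 * (1 + Real.log K) / 2 := by
    rw [shift_sum (fun j => gfun j ^ 2 / j / 2) K hK, ← Finset.sum_div]
    apply div_le_div_of_nonneg_right ?_ (by norm_num : (0:ℝ) ≤ 2)
    calc ∑ j ∈ Finset.Icc 1 (K - 1), gfun j ^ 2 / j ≤ Real.exp 3 * (1 + Real.log (K - 1 : ℕ)) :=
          L1 (K - 1)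
      _ ≤ Real.exp 3 * (1 + Real.log K) := by
          have h1 : Real.log ((K - 1 : ℕ) : ℝ) ≤ Real.log (K : ℝ) := by
            rcases Nat.eq_zero_or_pos (K - 1) with h | h
            · rw [h]; simpa using Real.log_natCast_nonneg K
            · exact Real.log_le_log (by exact_mod_cast h) (by exact_mod_cast Nat.sub_le K 1)
          exact mul_le_mul_of_nonneg_left (by linarith) (Real.exp_pos 3).le
  linarith

lemma S_minus (K : ℕ) (hK : 2 ≤ K) :
    ∑ k ∈ Finset.Icc 2 K, (∏ p ∈ (k * (k + 1)).primeFactors, (p : ℝ) / ((p : ℝ) - 1)) / k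
      ≤ 3 * Real.exp 3 * (1 + Real.log K) := by
  have step : ∀ k ∈ Finset.Icc 2 K,
      (∏ p ∈ (k * (k + 1)).primeFactors, (p : ℝ) / ((p : ℝ) - 1)) / k
        ≤ gfun k ^ 2 / k / 2 + gfun (k + 1) ^ 2 / (k + 1 : ℕ) := by
    intro k hk
    have hk2 : 2 ≤ k := (Finset.mem_Icc.1 hk).1
    have hkR : (2:ℝ) ≤ k := by exact_mod_cast hk2
    have h1 : (∏ p ∈ (k * (k + 1)).primeFactors, (p : ℝ) / ((p : ℝ) - 1)) / k
        ≤ gfun k * gfun (k + 1) / k := by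
      apply div_le_div_of_nonneg_right (prod_union_le k (k + 1) (by omega) (by omega)) (by linarith)
    refine h1.trans ?_
    have hab : gfun k * gfun (k + 1) ≤ (gfun k ^ 2 + gfun (k + 1) ^ 2) / 2 := by
      nlinarith [sq_nonneg (gfun k - gfun (k + 1))]
    have h2 : gfun k * gfun (k + 1) / k ≤ (gfun k ^ 2 + gfun (k + 1) ^ 2) / 2 / k :=
      div_le_div_of_nonneg_right hab (by linarith)
    refine h2.trans ?_
    have hc : (0:ℝ) < (k:ℝ) := by linarith
    have hd : (0:ℝ) < ((k + 1 : ℕ) : ℝ) := by positivity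
    have hle2 : ((k + 1 : ℕ) : ℝ) ≤ 2 * (k:ℝ) := by push_cast; linarith
    have e1 : (gfun k ^ 2 + gfun (k + 1) ^ 2) / 2 / k
        = gfun k ^ 2 / k / 2 + gfun (k + 1) ^ 2 / (2 * k) := by ring
    have e2 : gfun (k + 1) ^ 2 / (2 * k) ≤ gfun (k + 1) ^ 2 / ((k + 1 : ℕ) : ℝ) :=
      div_le_div_of_nonneg_left (sq_nonneg _) hd hle2
    rw [e1]
    linarith
  refine (Finset.sum_le_sum step).trans ?_
  rw [Finset.sum_add_distrib]
  have hA : ∑ k ∈ Finset.Icc 2 K, gfun k ^ 2 / k / 2 ≤ Real.exp 3 * (1 + Real.log K) / 2 := by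
    rw [← Finset.sum_div]
    apply div_le_div_of_nonneg_right ?_ (by norm_num : (0:ℝ) ≤ 2)
    calc ∑ k ∈ Finset.Icc 2 K, gfun k ^ 2 / k ≤ ∑ k ∈ Finset.Icc 1 K, gfun k ^ 2 / k := by
          refine Finset.sum_le_sum_of_subset_of_nonneg ?_ ?_
          · exact Finset.Icc_subset_Icc (by omega) le_rfl
          · intro k _ _
            have := gfun_nonneg k
            positivity
      _ ≤ Real.exp 3 * (1 + Real.log K) := L1 K
  have hB : ∑ k ∈ Finset.Icc 2 K, gfun (k + 1) ^ 2 / (k + 1 : ℕ)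
      ≤ 2 * (Real.exp 3 * (1 + Real.log K)) := by
    have reindex : ∑ k ∈ Finset.Icc 2 K, gfun (k + 1) ^ 2 / (k + 1 : ℕ)
        = ∑ j ∈ Finset.Icc 3 (K + 1), gfun j ^ 2 / j := by
      have : Finset.Icc 3 (K + 1) = Finset.map (addRightEmbedding 1) (Finset.Icc 2 K) := by
        rw [Finset.map_add_right_Icc]
      rw [this, Finset.sum_map]
      refine Finset.sum_congr rfl fun j hj => ?_
      simp [addRightEmbedding]
    rw [reindex]
    calc ∑ j ∈ Finset.Icc 3 (K + 1), gfun j ^ 2 / j ≤ ∑ j ∈ Finset.Icc 1 (K + 1), gfun j ^ 2 / j := by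
          refine Finset.sum_le_sum_of_subset_of_nonneg ?_ ?_
          · exact Finset.Icc_subset_Icc (by omega) le_rfl
          · intro k _ _
            have := gfun_nonneg k
            positivity
      _ ≤ Real.exp 3 * (1 + Real.log (K + 1 : ℕ)) := L1 (K + 1)
      _ ≤ 2 * (Real.exp 3 * (1 + Real.log K)) := by
          have hKR : (2:ℝ) ≤ (K:ℝ) := by exact_mod_cast hK
          have hlog : Real.log ((K + 1 : ℕ) : ℝ) ≤ 2 * Real.log K := by
            have : ((K + 1 : ℕ) : ℝ) ≤ (K:ℝ) ^ 2 := by push_cast; nlinarith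
            calc Real.log ((K + 1 : ℕ) : ℝ) ≤ Real.log ((K:ℝ) ^ 2) :=
                  Real.log_le_log (by positivity) this
              _ = 2 * Real.log K := by rw [Real.log_pow]; push_cast; ring
          have hlogK : 0 ≤ Real.log (K:ℝ) := Real.log_nonneg (by linarith)
          have hE : 0 < Real.exp 3 := Real.exp_pos 3
          nlinarith
  nlinarith [Real.exp_pos 3, Real.log_natCast_nonneg K]

/-- Assuming for each `k ≥ 2` the bounds
`N_k^±(x) ≪ (∏_{p | k(k∓1)} p/(p−1)) x/(log x)²` where `N_k^±(x)` counts `x < n ≤ 2x`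
with `n+1` and `kn±1` both prime, one has
`∑_{k=2}^{(2x)^δ} N_k^+(x)/k + ∑_{k=2}^{(2x)^δ} N_k^−(x)/k = O(δ x / log x)`
for every fixed `δ ∈ (0,1)`, with implied constant independent of `δ`. -/
theorem stmt_17
    (hsieve : ∃ C : ℝ, ∀ k : ℕ, ∀ x : ℝ, 2 ≤ k → 2 ≤ x →
      ((((Finset.Ioc ⌊x⌋₊ (2 * ⌊x⌋₊)).filter (fun n =>
            (n + 1).Prime ∧ (k * n + 1).Prime)).card : ℝ)
          ≤ C * (∏ p ∈ (k * (k - 1)).primeFactors, (p : ℝ) / ((p : ℝ) - 1))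
              * x / Real.log x ^ 2)
        ∧ ((((Finset.Ioc ⌊x⌋₊ (2 * ⌊x⌋₊)).filter (fun n =>
            (n + 1).Prime ∧ (k * n - 1).Prime)).card : ℝ)
          ≤ C * (∏ p ∈ (k * (k + 1)).primeFactors, (p : ℝ) / ((p : ℝ) - 1))
              * x / Real.log x ^ 2)) :
    ∃ C' : ℝ, ∀ δ : ℝ, 0 < δ → δ < 1 → ∃ x₀ : ℝ, ∀ x : ℝ, x₀ ≤ x →
      (∑ k ∈ Finset.Icc 2 ⌊(2 * x) ^ δ⌋₊,
          (((Finset.Ioc ⌊x⌋₊ (2 * ⌊x⌋₊)).filter (fun n =>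
            (n + 1).Prime ∧ (k * n + 1).Prime)).card : ℝ) / k)
      + (∑ k ∈ Finset.Icc 2 ⌊(2 * x) ^ δ⌋₊,
          (((Finset.Ioc ⌊x⌋₊ (2 * ⌊x⌋₊)).filter (fun n =>
            (n + 1).Prime ∧ (k * n - 1).Prime)).card : ℝ) / k)
      ≤ C' * δ * x / Real.log x := by
  obtain ⟨C0, hC⟩ := hsieve
  set C : ℝ := max C0 0 with hCdef
  have hC0C : C0 ≤ C := le_max_left _ _
  have hCnn : 0 ≤ C := le_max_right _ _
  refine ⟨12 * Real.exp 3 * C, ?_⟩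
  intro δ hδ0 hδ1
  refine ⟨max 3 (Real.exp (2 / δ)), ?_⟩
  intro x hx
  have hx3 : (3:ℝ) ≤ x := le_trans (le_max_left _ _) hx
  have hx2 : (2:ℝ) ≤ x := by linarith
  have hxpos : (0:ℝ) < x := by linarith
  set L : ℝ := Real.log x with hLdef
  have hLge : 2 / δ ≤ L := by
    rw [hLdef, ← Real.log_exp (2 / δ)]
    exact Real.log_le_log (Real.exp_pos _) (le_trans (le_max_right _ _) hx)
  have hδL : 2 ≤ δ * L := by
    rw [div_le_iff₀ hδ0] at hLge
    linarith [hLge]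
  have hLpos : (0:ℝ) < L := by nlinarith
  set K : ℕ := ⌊(2 * x) ^ δ⌋₊ with hKdef
  have h2xpos : (0:ℝ) < 2 * x := by linarith
  -- K ≥ 2
  have hrpow3 : (3:ℝ) ≤ (2 * x) ^ δ := by
    have h1 : Real.exp 2 ≤ x ^ δ := by
      rw [Real.rpow_def_of_pos hxpos]
      exact Real.exp_le_exp.2 (by rw [mul_comm]; exact hδL.trans_eq (by rw [hLdef]))
    have h2 : x ^ δ ≤ (2 * x) ^ δ :=
      Real.rpow_le_rpow (le_of_lt hxpos) (by linarith) (le_of_lt hδ0)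
    have h3 : (3:ℝ) ≤ Real.exp 2 := by
      have := Real.add_one_le_exp (2:ℝ)
      have h4 : Real.exp 1 ^ 2 = Real.exp 2 := by
        rw [← Real.exp_nat_mul]; norm_num
      nlinarith [Real.exp_one_gt_d9]
    linarith
  have hK2 : 2 ≤ K := by
    have : (2:ℕ) ≤ ⌊(2 * x) ^ δ⌋₊ := Nat.le_floor (by push_cast; linarith)
    exact this
  have hKR : (2:ℝ) ≤ (K:ℝ) := by exact_mod_cast hK2
  -- log K ≤ 2δL  and 1 + log K ≤ 3δL
  have hlogK : Real.log (K:ℝ) ≤ 2 * (δ * L) := by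
    have h1 : (K:ℝ) ≤ (2 * x) ^ δ := Nat.floor_le (Real.rpow_nonneg (by linarith) δ)
    have h2 : Real.log (K:ℝ) ≤ Real.log ((2 * x) ^ δ) :=
      Real.log_le_log (by linarith) h1
    rw [Real.log_rpow h2xpos, Real.log_mul (by norm_num) (ne_of_gt hxpos)] at h2
    have hlog2 : Real.log 2 ≤ L := by
      rw [hLdef]
      exact Real.log_le_log (by norm_num) hx2
    calc Real.log (K:ℝ) ≤ δ * (Real.log 2 + L) := h2.trans_eq (by rw [hLdef])
      _ ≤ 2 * (δ * L) := by nlinarith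
  have hkey : 1 + Real.log (K:ℝ) ≤ 3 * (δ * L) := by linarith
  -- bound the two sums
  have hPnn : ∀ m : ℕ, (0:ℝ) ≤ ∏ p ∈ m.primeFactors, (p : ℝ) / ((p : ℝ) - 1) :=
    fun m => gfun_nonneg m
  have hCxnn : 0 ≤ C * x / L ^ 2 := by positivity
  have hplus : (∑ k ∈ Finset.Icc 2 K,
      (((Finset.Ioc ⌊x⌋₊ (2 * ⌊x⌋₊)).filter (fun n =>
        (n + 1).Prime ∧ (k * n + 1).Prime)).card : ℝ) / k)
      ≤ (C * x / L ^ 2) * (Real.exp 3 * (1 + Real.log K)) := by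
    calc _ ≤ ∑ k ∈ Finset.Icc 2 K,
          (C * x / L ^ 2) * ((∏ p ∈ (k * (k - 1)).primeFactors, (p : ℝ) / ((p : ℝ) - 1)) / k) := by
          refine Finset.sum_le_sum fun k hk => ?_
          have hk2 : 2 ≤ k := (Finset.mem_Icc.1 hk).1
          have hkpos : (0:ℝ) < k := by exact_mod_cast Nat.lt_of_lt_of_le Nat.zero_lt_two hk2
          have h1 := (hC k x hk2 hx2).1
          have h2 : (((Finset.Ioc ⌊x⌋₊ (2 * ⌊x⌋₊)).filter (fun n =>
              (n + 1).Prime ∧ (k * n + 1).Prime)).card : ℝ)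
              ≤ C * (∏ p ∈ (k * (k - 1)).primeFactors, (p : ℝ) / ((p : ℝ) - 1)) * x / L ^ 2 := by
            refine h1.trans ?_
            rw [hLdef]
            gcongr
            exact hPnn _
          have h3 := div_le_div_of_nonneg_right h2 hkpos.le
          refine h3.trans_eq ?_
          ring
      _ = (C * x / L ^ 2) * ∑ k ∈ Finset.Icc 2 K,
            (∏ p ∈ (k * (k - 1)).primeFactors, (p : ℝ) / ((p : ℝ) - 1)) / k := by
          rw [Finset.mul_sum]
      _ ≤ _ := mul_le_mul_of_nonneg_left (S_plus K hK2) hCxnn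
  have hminus : (∑ k ∈ Finset.Icc 2 K,
      (((Finset.Ioc ⌊x⌋₊ (2 * ⌊x⌋₊)).filter (fun n =>
        (n + 1).Prime ∧ (k * n - 1).Prime)).card : ℝ) / k)
      ≤ (C * x / L ^ 2) * (3 * Real.exp 3 * (1 + Real.log K)) := by
    calc _ ≤ ∑ k ∈ Finset.Icc 2 K,
          (C * x / L ^ 2) * ((∏ p ∈ (k * (k + 1)).primeFactors, (p : ℝ) / ((p : ℝ) - 1)) / k) := by
          refine Finset.sum_le_sum fun k hk => ?_
          have hk2 : 2 ≤ k := (Finset.mem_Icc.1 hk).1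
          have hkpos : (0:ℝ) < k := by exact_mod_cast Nat.lt_of_lt_of_le Nat.zero_lt_two hk2
          have h1 := (hC k x hk2 hx2).2
          have h2 : (((Finset.Ioc ⌊x⌋₊ (2 * ⌊x⌋₊)).filter (fun n =>
              (n + 1).Prime ∧ (k * n - 1).Prime)).card : ℝ)
              ≤ C * (∏ p ∈ (k * (k + 1)).primeFactors, (p : ℝ) / ((p : ℝ) - 1)) * x / L ^ 2 := by
            refine h1.trans ?_
            rw [hLdef]
            gcongr
            exact hPnn _
          have h3 := div_le_div_of_nonneg_right h2 hkpos.le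
          refine h3.trans_eq ?_
          ring
      _ = (C * x / L ^ 2) * ∑ k ∈ Finset.Icc 2 K,
            (∏ p ∈ (k * (k + 1)).primeFactors, (p : ℝ) / ((p : ℝ) - 1)) / k := by
          rw [Finset.mul_sum]
      _ ≤ _ := mul_le_mul_of_nonneg_left (S_minus K hK2) hCxnn
  have htotal : (∑ k ∈ Finset.Icc 2 K,
      (((Finset.Ioc ⌊x⌋₊ (2 * ⌊x⌋₊)).filter (fun n =>
        (n + 1).Prime ∧ (k * n + 1).Prime)).card : ℝ) / k)
      + (∑ k ∈ Finset.Icc 2 K,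
      (((Finset.Ioc ⌊x⌋₊ (2 * ⌊x⌋₊)).filter (fun n =>
        (n + 1).Prime ∧ (k * n - 1).Prime)).card : ℝ) / k)
      ≤ (C * x / L ^ 2) * (4 * Real.exp 3 * (1 + Real.log K)) := by
    have := add_le_add hplus hminus
    refine this.trans_eq ?_
    ring
  refine htotal.trans ?_
  have hEpos : (0:ℝ) < Real.exp 3 := Real.exp_pos 3
  have hstep : (C * x / L ^ 2) * (4 * Real.exp 3 * (1 + Real.log K))
      ≤ (C * x / L ^ 2) * (4 * Real.exp 3 * (3 * (δ * L))) := by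
    refine mul_le_mul_of_nonneg_left ?_ hCxnn
    nlinarith
  refine hstep.trans_eq ?_
  rw [hLdef] at *
  field_simp
  ring
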